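/- Suppose H is a nontrivial BSHM(n,ℓ,a,b) with respect to H₁ (so 1 < ℓ < n−1), with the values a and b both attained, and suppose a ≢ b (mod 4). Then b ≠ −a; exactly one of the congruences ℓ ≡ a (mod 4) and ℓ ≡ b (mod 4) holds; and if ℓ ≡ a (mod 4), then k_a(i) = n/2 − 1 for every column index i. -/

import Mathlib

open Matrix Finset

/-- A Hadamard matrix of order `n`: entries in `{1,-1}` and `Hᵀ * H = n • 1`. -/
def IsHadamard {n : ℕ} (H : Matrix (Fin n) (Fin n) ℤ) : Prop :=
  (∀ i j, H i j = 1 ∨ H i j = -1) ∧ Hᵀ * H = (n : ℤ) • 1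

/-- Dot product of columns `j` and `k` of the submatrix of `H` formed by the rows in `R`. -/
def colDot {n : ℕ} (H : Matrix (Fin n) (Fin n) ℤ) (R : Finset (Fin n)) (j k : Fin n) : ℤ :=
  ∑ i ∈ R, H i j * H i k

/-- `H` is a balanced splittable Hadamard matrix with respect to the submatrix formed by the
rows in `R`, with values `a, b`. -/
def IsBSHM {n : ℕ} (H : Matrix (Fin n) (Fin n) ℤ) (R : Finset (Fin n)) (a b : ℤ) : Prop :=
  _root_.IsHadamard H ∧ ∀ j k : Fin n, j ≠ k → colDot H R j k = a ∨ colDot H R j k = b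

/-- `kA H R a i` is the number of columns `j ≠ i` whose dot product with column `i`
(in the submatrix with rows `R`) equals `a`. -/
def kA {n : ℕ} (H : Matrix (Fin n) (Fin n) ℤ) (R : Finset (Fin n)) (a : ℤ) (i : Fin n) : ℕ :=
  (univ.filter fun j => j ≠ i ∧ colDot H R i j = a).card

lemma colDot_symm {n : ℕ} (H : Matrix (Fin n) (Fin n) ℤ) (R : Finset (Fin n)) (j k : Fin n) :
    colDot H R j k = colDot H R k j :=
  Finset.sum_congr rfl fun i _ => mul_comm _ _

lemma colDot_self {n : ℕ} (H : Matrix (Fin n) (Fin n) ℤ) (R : Finset (Fin n))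
    (hH : ∀ i j, H i j = 1 ∨ H i j = -1) (j : Fin n) :
    colDot H R j j = (R.card : ℤ) := by
  unfold colDot
  rw [Finset.sum_congr rfl (fun i _ => show H i j * H i j = 1 by
        rcases hH i j with h | h <;> rw [h] <;> ring),
      Finset.sum_const, nsmul_eq_mul, mul_one]

lemma colDot_mod2 {n : ℕ} (H : Matrix (Fin n) (Fin n) ℤ) (R : Finset (Fin n))
    (hH : ∀ i j, H i j = 1 ∨ H i j = -1) (j k : Fin n) :
    (colDot H R j k) % 2 = (R.card : ℤ) % 2 := by
  have : ((colDot H R j k : ℤ) : ZMod 2) = ((R.card : ℤ) : ZMod 2) := by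
    unfold colDot
    push_cast
    rw [Finset.sum_congr rfl (fun i _ => show ((H i j : ZMod 2) * (H i k : ZMod 2)) = 1 by
          rcases hH i j with h | h <;> rcases hH i k with h' | h' <;> rw [h, h'] <;> decide),
        Finset.sum_const, nsmul_eq_mul, mul_one]
  exact (ZMod.intCast_eq_intCast_iff _ _ _).mp this

lemma colDot_triple_mod4 {n : ℕ} (H : Matrix (Fin n) (Fin n) ℤ) (R : Finset (Fin n))
    (hH : ∀ i j, H i j = 1 ∨ H i j = -1) (i j k : Fin n) :
    (colDot H R i j + colDot H R i k + colDot H R j k) % 4 = (3 * (R.card : ℤ)) % 4 := by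
  have : ((colDot H R i j + colDot H R i k + colDot H R j k : ℤ) : ZMod 4)
      = ((3 * (R.card : ℤ) : ℤ) : ZMod 4) := by
    unfold colDot
    push_cast
    rw [← Finset.sum_add_distrib, ← Finset.sum_add_distrib,
        Finset.sum_congr rfl (fun r _ =>
          show (H r i : ZMod 4) * (H r j : ZMod 4) + (H r i : ZMod 4) * (H r k : ZMod 4)
              + (H r j : ZMod 4) * (H r k : ZMod 4) = 3 by
            rcases hH r i with h | h <;> rcases hH r j with h' | h' <;>
              rcases hH r k with h'' | h'' <;> rw [h, h', h''] <;> decide),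
        Finset.sum_const, nsmul_eq_mul]
    ring
  exact (ZMod.intCast_eq_intCast_iff _ _ _).mp this

lemma hadamard_mul_transpose {n : ℕ} (H : Matrix (Fin n) (Fin n) ℤ) (hn : 0 < n)
    (hH : Hᵀ * H = (n : ℤ) • 1) : H * Hᵀ = (n : ℤ) • 1 := by
  have hn' : (n : ℚ) ≠ 0 := Nat.cast_ne_zero.mpr hn.ne'
  set f : ℤ →+* ℚ := Int.castRingHom ℚ with hf
  have hmap : (H.map f)ᵀ * H.map f = (n : ℚ) • 1 := by
    rw [← Matrix.transpose_map, ← Matrix.map_mul, hH]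
    ext i j
    simp only [Matrix.map_apply, Matrix.smul_apply, Matrix.one_apply, smul_eq_mul]
    split <;> simp
  have h1 : ((n : ℚ)⁻¹ • (H.map f)ᵀ) * H.map f = 1 := by
    rw [Matrix.smul_mul, hmap, smul_smul, inv_mul_cancel₀ hn', one_smul]
  have h2 : H.map f * ((n : ℚ)⁻¹ • (H.map f)ᵀ) = 1 := mul_eq_one_comm.mp h1
  have h3 : H.map f * (H.map f)ᵀ = (n : ℚ) • 1 := by
    calc H.map f * (H.map f)ᵀ = (n : ℚ) • (H.map f * ((n : ℚ)⁻¹ • (H.map f)ᵀ)) := by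
          rw [Matrix.mul_smul, smul_smul, mul_inv_cancel₀ hn', one_smul]
    _ = (n : ℚ) • 1 := by rw [h2]
  ext i j
  have h4 := congrFun (congrFun h3 i) j
  simp only [Matrix.mul_apply, Matrix.map_apply, Matrix.transpose_apply, Matrix.smul_apply,
    Matrix.one_apply, smul_eq_mul, hf, Int.coe_castRingHom] at h4 ⊢
  by_cases hij : i = j <;> simp only [hij, if_true, if_false, mul_one, mul_zero] at h4 ⊢ <;>
    exact_mod_cast h4

lemma colDot_mul_sum {n : ℕ} (H : Matrix (Fin n) (Fin n) ℤ) (R : Finset (Fin n))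
    (hHHT : H * Hᵀ = (n : ℤ) • 1) (i k : Fin n) :
    ∑ j : Fin n, colDot H R i j * colDot H R j k = (n : ℤ) * colDot H R i k := by
  have hrs : ∀ r s : Fin n, ∑ j : Fin n, H r j * H s j = if r = s then (n : ℤ) else 0 := by
    intro r s
    have h := congrFun (congrFun hHHT r) s
    simp only [Matrix.mul_apply, Matrix.transpose_apply, Matrix.smul_apply, Matrix.one_apply,
      smul_eq_mul] at h
    rw [h]
    split <;> simp
  unfold colDot
  calc ∑ j : Fin n, (∑ r ∈ R, H r i * H r j) * ∑ s ∈ R, H s j * H s k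
      = ∑ j : Fin n, ∑ r ∈ R, ∑ s ∈ R, (H r i * H r j) * (H s j * H s k) := by
        exact Finset.sum_congr rfl fun j _ => Finset.sum_mul_sum _ _ _ _
    _ = ∑ r ∈ R, ∑ s ∈ R, ∑ j : Fin n, (H r i * H r j) * (H s j * H s k) := by
        rw [Finset.sum_comm]
        exact Finset.sum_congr rfl fun r _ => Finset.sum_comm
    _ = ∑ r ∈ R, ∑ s ∈ R, (H r i * H s k) * ∑ j : Fin n, H r j * H s j := by
        refine Finset.sum_congr rfl fun r _ => Finset.sum_congr rfl fun s _ => ?_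
        rw [Finset.mul_sum]
        exact Finset.sum_congr rfl fun j _ => by ring
    _ = ∑ r ∈ R, (H r i * H r k) * (n : ℤ) := by
        refine Finset.sum_congr rfl fun r hr => ?_
        simp only [hrs, mul_ite, mul_zero]
        rw [Finset.sum_ite_eq, if_pos hr]
    _ = (n : ℤ) * ∑ r ∈ R, H r i * H r k := by
        rw [Finset.mul_sum]
        exact Finset.sum_congr rfl fun r _ => by ring

lemma bshm_neg_case {n : ℕ} (a : ℤ) (H : Matrix (Fin n) (Fin n) ℤ) (R : Finset (Fin n))
    (hent : ∀ i j, H i j = 1 ∨ H i j = -1)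
    (hHHT : H * Hᵀ = (n : ℤ) • 1)
    (hdot : ∀ j k : Fin n, j ≠ k → colDot H R j k = a ∨ colDot H R j k = -a)
    (h1 : 1 < R.card) (h2 : R.card < n - 1)
    (haodd : a % 2 = 1)
    (hor : (R.card : ℤ) % 4 = a % 4 ∨ (R.card : ℤ) % 4 = (-a) % 4) : False := by
  have hn4 : 4 ≤ n := by omega
  have ha0 : a ≠ 0 := by omega
  have hl2 : 2 ≤ (R.card : ℤ) := by omega
  have hln : (R.card : ℤ) ≤ (n : ℤ) - 2 := by omega
  have hcast : ((n - 2 : ℕ) : ℤ) = (n : ℤ) - 2 := by omega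
  have htriple : ∀ i j k : Fin n,
      (colDot H R i j + colDot H R i k + colDot H R j k) % 4 = (3 * (R.card : ℤ)) % 4 :=
    fun i j k => colDot_triple_mod4 H R hent i j k
  obtain ⟨d, hdodd, hkey⟩ : ∃ d : ℤ, d % 2 = 1 ∧ ∀ p q r : Fin n, p ≠ q → q ≠ r → p ≠ r →
      colDot H R p q * colDot H R q r = d * colDot H R p r := by
    rcases hor with hla | hlb
    · refine ⟨a, haodd, fun p q r hpq hqr hpr => ?_⟩
      have t := htriple p q r
      rcases hdot p q hpq with h1 | h1 <;> rcases hdot q r hqr with h2 | h2 <;>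
        rcases hdot p r hpr with h3 | h3 <;> rw [h1, h2, h3] <;> rw [h1, h2, h3] at t <;>
        first
          | ring1
          | (exfalso; omega)
    · refine ⟨-a, by omega, fun p q r hpq hqr hpr => ?_⟩
      have t := htriple p q r
      rcases hdot p q hpq with h1 | h1 <;> rcases hdot q r hqr with h2 | h2 <;>
        rcases hdot p r hpr with h3 | h3 <;> rw [h1, h2, h3] <;> rw [h1, h2, h3] at t <;>
        first
          | ring1
          | (exfalso; omega)
  have hn0 : 0 < n := by omega
  have hn1 : 1 < n := by omega
  obtain ⟨i, k, hik⟩ : ∃ i k : Fin n, i ≠ k :=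
    ⟨⟨0, hn0⟩, ⟨1, hn1⟩, by simp [Fin.ext_iff]⟩
  have hid := colDot_mul_sum H R hHHT i k
  have hsplit : ∑ j : Fin n, colDot H R i j * colDot H R j k
      = ∑ j ∈ univ \ ({i, k} : Finset (Fin n)), colDot H R i j * colDot H R j k
        + (colDot H R i i * colDot H R i k + colDot H R i k * colDot H R k k) := by
    rw [← Finset.sum_sdiff (Finset.subset_univ ({i, k} : Finset (Fin n))),
      Finset.sum_pair hik]
  have hterm : ∀ j ∈ univ \ ({i, k} : Finset (Fin n)),
      colDot H R i j * colDot H R j k = d * colDot H R i k := by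
    intro j hj
    simp only [Finset.mem_sdiff, Finset.mem_insert, Finset.mem_singleton, Finset.mem_univ,
      true_and, not_or] at hj
    exact hkey i j k (fun h => hj.1 h.symm) (fun h => hj.2 h) hik
  have hcard : (univ \ ({i, k} : Finset (Fin n))).card = n - 2 := by
    rw [Finset.card_sdiff_of_subset (Finset.subset_univ _), Finset.card_pair hik, card_univ,
      Fintype.card_fin]
  have hsum2 : ∑ j ∈ univ \ ({i, k} : Finset (Fin n)), colDot H R i j * colDot H R j k
      = ((n - 2 : ℕ) : ℤ) * (d * colDot H R i k) := by
    rw [Finset.sum_congr rfl hterm, Finset.sum_const, hcard, nsmul_eq_mul]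
  have hc := hdot i k hik
  have hc0 : colDot H R i k ≠ 0 := by
    rcases hc with h | h <;> rw [h] <;> simpa using ha0
  have heq : ((n : ℤ) - 2) * d * colDot H R i k + 2 * (R.card : ℤ) * colDot H R i k
      = (n : ℤ) * colDot H R i k := by
    rw [← hid, hsplit, hsum2, hcast, colDot_self H R hent i, colDot_self H R hent k]
    ring
  have heq2 : (((n : ℤ) - 2) * d + 2 * (R.card : ℤ)) * colDot H R i k
      = (n : ℤ) * colDot H R i k := by linear_combination heq
  have heq3 : ((n : ℤ) - 2) * d + 2 * (R.card : ℤ) = (n : ℤ) :=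
    mul_right_cancel₀ hc0 heq2
  have hd0 : d ≠ 0 := fun h => by simp [h] at hdodd
  rcases lt_or_gt_of_ne hd0 with hneg | hpos
  · have hle : ((n : ℤ) - 2) * d ≤ ((n : ℤ) - 2) * (-1) :=
      mul_le_mul_of_nonneg_left (by omega) (by linarith [hln, hl2])
    linarith [hle, heq3, hl2, hln]
  · have hle : ((n : ℤ) - 2) * 1 ≤ ((n : ℤ) - 2) * d :=
      mul_le_mul_of_nonneg_left (by omega) (by linarith [hln, hl2])
    linarith [hle, heq3, hl2, hln]

lemma bshm_sumk {n : ℕ} (a b : ℤ) (H : Matrix (Fin n) (Fin n) ℤ) (R : Finset (Fin n))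
    (hdot : ∀ j k : Fin n, j ≠ k → colDot H R j k = a ∨ colDot H R j k = b)
    (hab : a ≠ b) (i : Fin n) : kA H R a i + kA H R b i = n - 1 := by
  unfold kA
  have hfe : (univ.filter fun j => j ≠ i ∧ colDot H R i j = a)
      = ((univ.filter fun j => j ≠ i).filter fun j => colDot H R i j = a) := by
    rw [Finset.filter_filter]
  have hfb : (univ.filter fun j => j ≠ i ∧ colDot H R i j = b)
      = ((univ.filter fun j => j ≠ i).filter fun j => ¬ colDot H R i j = a) := by
    rw [Finset.filter_filter]
    apply Finset.filter_congr
    intro j _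
    constructor
    · rintro ⟨hji, hb⟩
      exact ⟨hji, fun ha => hab (ha.symm.trans hb)⟩
    · rintro ⟨hji, hna⟩
      exact ⟨hji, (hdot i j (Ne.symm hji)).resolve_left hna⟩
  rw [hfe, hfb, Finset.card_filter_add_card_filter_not, Finset.filter_ne',
    Finset.card_erase_of_mem (Finset.mem_univ i), card_univ, Fintype.card_fin]

lemma bshm_quad {n : ℕ} (a b : ℤ) (H : Matrix (Fin n) (Fin n) ℤ) (R : Finset (Fin n))
    (hent : ∀ i j, H i j = 1 ∨ H i j = -1)
    (hHHT : H * Hᵀ = (n : ℤ) • 1)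
    (hdot : ∀ j k : Fin n, j ≠ k → colDot H R j k = a ∨ colDot H R j k = b)
    (hab : a ≠ b) (i : Fin n) :
    (kA H R a i : ℤ) * a ^ 2 + (kA H R b i : ℤ) * b ^ 2
      = (n : ℤ) * (R.card : ℤ) - (R.card : ℤ) ^ 2 := by
  have h : ∑ j : Fin n, (colDot H R i j) ^ 2 = (n : ℤ) * (R.card : ℤ) := by
    have h := colDot_mul_sum H R hHHT i i
    rw [colDot_self H R hent i] at h
    rw [← h]
    exact Finset.sum_congr rfl fun j _ => by rw [colDot_symm H R j i, sq]
  rw [← Finset.sum_sdiff (Finset.subset_univ ({i} : Finset (Fin n))),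
    Finset.sum_singleton, colDot_self H R hent i] at h
  have hA : ((univ \ {i}).filter fun j => colDot H R i j = a)
      = univ.filter fun j => j ≠ i ∧ colDot H R i j = a := by
    ext j
    simp only [Finset.mem_filter, Finset.mem_sdiff, Finset.mem_singleton, Finset.mem_univ,
      true_and]
  have hB : ((univ \ {i}).filter fun j => ¬ colDot H R i j = a)
      = univ.filter fun j => j ≠ i ∧ colDot H R i j = b := by
    ext j
    simp only [Finset.mem_filter, Finset.mem_sdiff, Finset.mem_singleton, Finset.mem_univ,
      true_and]
    constructor
    · rintro ⟨hji, hna⟩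
      exact ⟨hji, (hdot i j (Ne.symm hji)).resolve_left hna⟩
    · rintro ⟨hji, hb⟩
      exact ⟨hji, fun ha => hab (ha.symm.trans hb)⟩
  have hsplit := Finset.sum_filter_add_sum_filter_not (univ \ ({i} : Finset (Fin n)))
    (fun j => colDot H R i j = a) (fun j => (colDot H R i j) ^ 2)
  have e1 : ∑ j ∈ (univ \ ({i} : Finset (Fin n))).filter (fun j => colDot H R i j = a),
      (colDot H R i j) ^ 2 = (kA H R a i : ℤ) * a ^ 2 := by
    rw [Finset.sum_congr rfl (fun j hj => by rw [(Finset.mem_filter.mp hj).2]),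
        Finset.sum_const, nsmul_eq_mul, hA]
    rfl
  have e2 : ∑ j ∈ (univ \ ({i} : Finset (Fin n))).filter (fun j => ¬ colDot H R i j = a),
      (colDot H R i j) ^ 2 = (kA H R b i : ℤ) * b ^ 2 := by
    rw [Finset.sum_congr rfl (fun j hj => by
          have hj' := Finset.mem_filter.mp hj
          have hji : j ≠ i := by
            have := Finset.mem_sdiff.mp hj'.1
            simpa using this.2
          rw [(hdot i j (Ne.symm hji)).resolve_left hj'.2]),
        Finset.sum_const, nsmul_eq_mul, hB]
    rfl
  rw [← e1, ← e2, hsplit]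
  linarith [h]

lemma bshm_count {n : ℕ} (a b : ℤ) (H : Matrix (Fin n) (Fin n) ℤ) (R : Finset (Fin n))
    (hent : ∀ i j, H i j = 1 ∨ H i j = -1)
    (hdot : ∀ j k : Fin n, j ≠ k → colDot H R j k = a ∨ colDot H R j k = b)
    (hab : a ≠ b) (hab4 : ¬ (a % 4 = b % 4)) (hla : (R.card : ℤ) % 4 = a % 4)
    (j₀ k₀ : Fin n) (hjk0 : j₀ ≠ k₀) (hb0 : colDot H R j₀ k₀ = b) :
    kA H R b j₀ + kA H R b k₀ = n := by
  have hb0' : colDot H R k₀ j₀ = b := (colDot_symm H R k₀ j₀).trans hb0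
  have hone : ∀ m : Fin n, ((if m ≠ j₀ ∧ colDot H R j₀ m = b then 1 else 0)
      + (if m ≠ k₀ ∧ colDot H R k₀ m = b then 1 else 0) : ℕ) = 1 := by
    intro m
    by_cases hm1 : m = j₀
    · subst hm1
      simp [hjk0, hb0']
    · by_cases hm2 : m = k₀
      · subst hm2
        simp [Ne.symm hjk0, hb0]
      · have t := colDot_triple_mod4 H R hent j₀ k₀ m
        rw [hb0] at t
        rcases hdot j₀ m (fun h => hm1 h.symm) with hx | hx <;>
          rcases hdot k₀ m (fun h => hm2 h.symm) with hy | hy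
        · exfalso
          rw [hx, hy] at t
          omega
        · simp [hm1, hm2, hx, hy, hab]
        · simp [hm1, hm2, hx, hy, hab]
        · exfalso
          rw [hx, hy] at t
          omega
  unfold kA
  rw [Finset.card_filter, Finset.card_filter, ← Finset.sum_add_distrib,
    Finset.sum_congr rfl fun m _ => hone m]
  simp

set_option maxHeartbeats 1000000 in
theorem stmt9 {n ℓ : ℕ} (a b : ℤ) (H : Matrix (Fin n) (Fin n) ℤ)
    (R : Finset (Fin n)) (hRcard : R.card = ℓ) (h1 : 1 < ℓ) (h2 : ℓ < n - 1)
    (hbshm : IsBSHM H R a b)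
    (haAtt : ∃ j k, j ≠ k ∧ colDot H R j k = a)
    (hbAtt : ∃ j k, j ≠ k ∧ colDot H R j k = b)
    (hmod : ¬ Int.ModEq 4 a b) :
    b ≠ -a ∧
    Xor' (Int.ModEq 4 (ℓ : ℤ) a) (Int.ModEq 4 (ℓ : ℤ) b) ∧
    (Int.ModEq 4 (ℓ : ℤ) a → ∀ i : Fin n, (kA H R a i : ℚ) = (n : ℚ) / 2 - 1) := by
  obtain ⟨⟨hent, hHtH⟩, hdot⟩ := hbshm
  subst hRcard
  have hn4 : 4 ≤ n := by omega
  have hHHT := hadamard_mul_transpose H (by omega) hHtH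
  have hab4 : ¬ (a % 4 = b % 4) := hmod
  have hab : a ≠ b := fun h => hab4 (by rw [h])
  have hamod2 : a % 2 = (R.card : ℤ) % 2 := by
    obtain ⟨j, k, hjk, hjka⟩ := haAtt
    have h := colDot_mod2 H R hent j k
    rw [hjka] at h
    exact h
  have hbmod2 : b % 2 = (R.card : ℤ) % 2 := by
    obtain ⟨j, k, hjk, hjkb⟩ := hbAtt
    have h := colDot_mod2 H R hent j k
    rw [hjkb] at h
    exact h
  have hxor : Xor' (Int.ModEq 4 (R.card : ℤ) a) (Int.ModEq 4 (R.card : ℤ) b) := by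
    show ((R.card : ℤ) % 4 = a % 4 ∧ ¬ (R.card : ℤ) % 4 = b % 4) ∨
      ((R.card : ℤ) % 4 = b % 4 ∧ ¬ (R.card : ℤ) % 4 = a % 4)
    omega
  have hor : (R.card : ℤ) % 4 = a % 4 ∨ (R.card : ℤ) % 4 = b % 4 := by omega
  have hbna : b ≠ -a := by
    intro hba
    subst hba
    exact bshm_neg_case a H R hent hHHT hdot h1 h2 (by omega) hor
  refine ⟨hbna, hxor, ?_⟩
  intro hla i
  have hla' : (R.card : ℤ) % 4 = a % 4 := hla
  have habne : a ^ 2 - b ^ 2 ≠ 0 := by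
    intro h
    have h' : (a - b) * (a + b) = 0 := by linear_combination h
    rcases mul_eq_zero.mp h' with h'' | h''
    · exact hab (by linarith)
    · exact hbna (by linarith)
  have hconstZ : ∀ i' : Fin n, (kA H R a i' : ℤ) * (a ^ 2 - b ^ 2)
      = ((n : ℤ) * (R.card : ℤ) - (R.card : ℤ) ^ 2) - ((n : ℤ) - 1) * b ^ 2 := by
    intro i'
    have hq := bshm_quad a b H R hent hHHT hdot hab i'
    have hs : (kA H R a i' : ℤ) + (kA H R b i' : ℤ) = (n : ℤ) - 1 := by
      have h := bshm_sumk a b H R hdot hab i'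
      omega
    linear_combination hq - b ^ 2 * hs
  have hconst : ∀ i' : Fin n, kA H R a i' = kA H R a i := by
    intro i'
    have h := mul_right_cancel₀ habne ((hconstZ i').trans (hconstZ i).symm)
    exact_mod_cast h
  obtain ⟨j₀, k₀, hjk0, hb0⟩ := hbAtt
  have hacount := bshm_count a b H R hent hdot hab hab4 hla' j₀ k₀ hjk0 hb0
  have h2k : 2 * kA H R a i = n - 2 := by
    have e1 := bshm_sumk a b H R hdot hab j₀
    have e2 := bshm_sumk a b H R hdot hab k₀
    have c1 := hconst j₀
    have c2 := hconst k₀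
    omega
  have hq := congrArg (Nat.cast : ℕ → ℚ) h2k
  rw [Nat.cast_sub (by omega : 2 ≤ n)] at hq
  push_cast at hq
  linarith
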